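/- Let T : X → Y be a fuzzy bounded linear operator between fuzzy strong φ-b-normed linear spaces. Then T is fuzzy continuous, i.e., for every x ∈ X and every sequence (xₙ) with lim_{n→∞} N₁(xₙ − x, t) = 1 for all t > 0, one has lim_{n→∞} N₂(Txₙ − Tx, t) = 1 for all t > 0. -/

import Mathlib

open Filter Topology

structure PhiFun (φ : ℝ → ℝ) : Prop where
  even : ∀ t, φ (-t) = φ t
  one : φ 1 = 1
  strictMono : StrictMonoOn φ (Set.Ioi 0)
  contOn : ContinuousOn φ (Set.Ioi 0)
  tendsto_zero : Tendsto φ (nhdsWithin 0 (Set.Ioi 0)) (nhds 0)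
  tendsto_atTop : Tendsto φ atTop atTop

structure IsTNorm (star : ℝ → ℝ → ℝ) : Prop where
  mem : ∀ a ∈ Set.Icc (0:ℝ) 1, ∀ b ∈ Set.Icc (0:ℝ) 1, star a b ∈ Set.Icc (0:ℝ) 1
  assoc : ∀ a b c, star (star a b) c = star a (star b c)
  comm : ∀ a b, star a b = star b a
  one_right : ∀ a ∈ Set.Icc (0:ℝ) 1, star a 1 = a
  mono : ∀ a b c d, a ≤ b → c ≤ d → star a c ≤ star b d

structure IsFuzzyPhiBNorm {X : Type*} [AddCommGroup X] [Module ℝ X]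
    (N : X → ℝ → ℝ) (φ : ℝ → ℝ) (K : ℝ) (star : ℝ → ℝ → ℝ) : Prop where
  one_le_K : 1 ≤ K
  phi : PhiFun φ
  tnorm : IsTNorm star
  mem : ∀ x t, N x t ∈ Set.Icc (0:ℝ) 1
  bN1 : ∀ x : X, ∀ t ≤ (0:ℝ), N x t = 0
  bN2 : ∀ x : X, (∀ t > (0:ℝ), N x t = 1) ↔ x = 0
  bN3 : ∀ (c : ℝ) (x : X), ∀ t > (0:ℝ), φ c ≠ 0 → N (c • x) t = N x (t / φ c)
  bN4 : ∀ (x y : X) (s t : ℝ), star (N x s) (N y t) ≤ N (x + y) (s + K * t)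
  bN5 : ∀ x : X, Monotone (N x) ∧ Tendsto (N x) atTop (nhds 1)

noncomputable def FuzzyBounded {X Y : Type*} [AddCommGroup X] [Module ℝ X]
    [AddCommGroup Y] [Module ℝ Y]
    (N1 : X → ℝ → ℝ) (N2 : Y → ℝ → ℝ) (K : ℝ) (T : X →ₗ[ℝ] Y) : Prop :=
  ∀ α ∈ Set.Ioo (0:ℝ) 1, ∃ M > (0:ℝ), ∀ x : X,
    sInf {t | 0 < t ∧ α ≤ N2 (T x) (K * t)} ≤ M * sInf {t | 0 < t ∧ 1 - α ≤ N1 x t}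

def FConv {Y : Type*} [AddCommGroup Y]
    (N : Y → ℝ → ℝ) (y : ℕ → Y) (l : Y) : Prop :=
  ∀ t > (0:ℝ), Tendsto (fun n => N (y n - l) t) atTop (nhds 1)

def FContAt {X Y : Type*} [AddCommGroup X] [Module ℝ X] [AddCommGroup Y] [Module ℝ Y]
    (N1 : X → ℝ → ℝ) (N2 : Y → ℝ → ℝ) (T : X →ₗ[ℝ] Y) (x : X) : Prop :=
  ∀ xs : ℕ → X, FConv N1 xs x → FConv N2 (fun n => T (xs n)) (T x)

theorem stmt5 {X Y : Type*} [AddCommGroup X] [Module ℝ X] [AddCommGroup Y] [Module ℝ Y]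
    (N1 : X → ℝ → ℝ) (N2 : Y → ℝ → ℝ) (φ : ℝ → ℝ) (K : ℝ)
    (star1 star2 : ℝ → ℝ → ℝ)
    (hN1 : IsFuzzyPhiBNorm N1 φ K star1) (hN2 : IsFuzzyPhiBNorm N2 φ K star2)
    (T : X →ₗ[ℝ] Y) (hT : FuzzyBounded N1 N2 K T) :
    ∀ x : X, FContAt N1 N2 T x := by
  intro x xs hconv t ht
  have hK : (0:ℝ) < K := lt_of_lt_of_le one_pos hN2.one_le_K
  have hmap : ∀ n, T (xs n) - T x = T (xs n - x) := fun n => (map_sub T _ _).symm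
  rw [tendsto_order]
  constructor
  · intro a ha
    set α : ℝ := (max a 0 + 1) / 2 with hαdef
    have hα0 : 0 < α := by
      have : (0:ℝ) ≤ max a 0 := le_max_right a 0
      rw [hαdef]; linarith
    have hα1 : α < 1 := by
      have : max a 0 < 1 := max_lt ha one_pos
      rw [hαdef]; linarith
    have haα : a < α := by
      have h1 : a ≤ max a 0 := le_max_left a 0
      rw [hαdef]; have : max a 0 < 1 := max_lt ha one_pos; linarith
    obtain ⟨M, hM, hbound⟩ := hT α ⟨hα0, hα1⟩
    set δ : ℝ := t / (2 * K * M) with hδdef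
    have hδ : 0 < δ := by positivity
    have h1 : ∀ᶠ n in atTop, 1 - α ≤ N1 (xs n - x) δ :=
      (hconv δ hδ).eventually (eventually_ge_nhds (by linarith : 1 - α < 1))
    filter_upwards [h1] with n hn
    have hRHS : sInf {s | 0 < s ∧ 1 - α ≤ N1 (xs n - x) s} ≤ δ :=
      csInf_le ⟨0, fun s hs => le_of_lt hs.1⟩ ⟨hδ, hn⟩
    have hlt : sInf {s | 0 < s ∧ α ≤ N2 (T (xs n - x)) (K * s)} < t / K := by
      have h2 := hbound (xs n - x)
      have h3 : M * sInf {s | 0 < s ∧ 1 - α ≤ N1 (xs n - x) s} ≤ M * δ :=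
        mul_le_mul_of_nonneg_left hRHS (le_of_lt hM)
      have h4 : M * δ < t / K := by
        have he : M * δ = t / (2 * K) := by rw [hδdef]; field_simp
        rw [he, div_lt_div_iff₀ (by positivity) hK]
        nlinarith
      linarith
    have hne : {s | 0 < s ∧ α ≤ N2 (T (xs n - x)) (K * s)}.Nonempty := by
      have hev : ∀ᶠ u in atTop, α ≤ N2 (T (xs n - x)) u :=
        (hN2.bN5 (T (xs n - x))).2.eventually (eventually_ge_nhds hα1)
      obtain ⟨u, hu, hu0⟩ := (hev.and (eventually_gt_atTop 0)).exists
      refine ⟨u / K, by positivity, ?_⟩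
      rwa [mul_div_cancel₀ u (ne_of_gt hK)]
    obtain ⟨s, ⟨hs0, hsα⟩, hst⟩ :=
      (csInf_lt_iff ⟨0, fun s hs => le_of_lt hs.1⟩ hne).1 hlt
    have hmono : N2 (T (xs n - x)) (K * s) ≤ N2 (T (xs n - x)) t := by
      apply (hN2.bN5 _).1
      have : K * s < K * (t / K) := by exact mul_lt_mul_of_pos_left hst hK
      rw [mul_div_cancel₀ t (ne_of_gt hK)] at this
      linarith
    have : α ≤ N2 (T (xs n - x)) t := le_trans hsα hmono
    rw [hmap n] at *
    linarith
  · intro a ha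
    filter_upwards with n
    exact lt_of_le_of_lt (hN2.mem _ _).2 ha
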